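/- Assume H is strictly convex (d_k > 0 for some finite k ≥ 2). For n ≥ 1 let H_n(s) = ∑_{k=1}^{n−1} d_k s^k + (1 − ∑_{k=1}^{n−1} d_k) s^n, let μ_n¹ be the unique root in (0,1) of H_n(x) + x = 1, and let μ_n² = min{x ∈ [0,1] : H_n(x) − x = 1 − 2μ_n¹} (this set is nonempty and closed, containing μ_n¹). Similarly let μ² = min{x ∈ [0,1] : H(x) − x = 1 − 2μ¹}. Then μ_n² → μ² as n → ∞. -/

import Mathlib

open MeasureTheory ProbabilityTheory Filter Topology

/-- The generating function `H(x) = ∑_{k≥1} d_k x^k` (we use `d : ℕ → ℝ` with `d 0 = 0`). -/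
noncomputable def genFun (d : ℕ → ℝ) (x : ℝ) : ℝ := ∑' k, d k * x ^ k

/-- The derivative `H'(x) = ∑_{k≥1} k d_k x^(k-1)`. -/
noncomputable def genFunDeriv (d : ℕ → ℝ) (x : ℝ) : ℝ :=
  ∑' k : ℕ, ((k : ℝ) + 1) * d (k + 1) * x ^ k

/-- The truncated generating function
`H_n(s) = ∑_{k=1}^{n-1} d_k s^k + (1 - ∑_{k=1}^{n-1} d_k) s^n`,
the generating function of `min(n, N)` (recall `d 0 = 0`). -/
noncomputable def genFunTrunc (d : ℕ → ℝ) (n : ℕ) (s : ℝ) : ℝ :=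
  ∑ k ∈ Finset.range n, d k * s ^ k + (1 - ∑ k ∈ Finset.range n, d k) * s ^ n

/-- The derivative of the truncated generating function,
`H_n'(s) = ∑_{k=1}^{n-1} k d_k s^(k-1) + n (1 - ∑_{k=1}^{n-1} d_k) s^(n-1)`. -/
noncomputable def genFunTruncDeriv (d : ℕ → ℝ) (n : ℕ) (s : ℝ) : ℝ :=
  ∑ k ∈ Finset.range n, (k : ℝ) * d k * s ^ (k - 1) +
    (n : ℝ) * (1 - ∑ k ∈ Finset.range n, d k) * s ^ (n - 1)

section helpers

variable {d : ℕ → ℝ}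

lemma summable_pow_aux (hdnn : ∀ k, 0 ≤ d k) (hdsum : Summable d) {x : ℝ}
    (hx0 : 0 ≤ x) (hx1 : x ≤ 1) : Summable fun k => d k * x ^ k :=
  Summable.of_nonneg_of_le (fun k => mul_nonneg (hdnn k) (pow_nonneg hx0 k))
    (fun k => mul_le_of_le_one_right (hdnn k) (pow_le_one₀ hx0 hx1)) hdsum

lemma genFun_mono (hdnn : ∀ k, 0 ≤ d k) (hdsum : Summable d) {x y : ℝ}
    (hx0 : 0 ≤ x) (hxy : x ≤ y) (hy1 : y ≤ 1) : genFun d x ≤ genFun d y :=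
  Summable.tsum_le_tsum (fun k => mul_le_mul_of_nonneg_left (pow_le_pow_left₀ hx0 hxy k) (hdnn k))
    (summable_pow_aux hdnn hdsum hx0 (hxy.trans hy1))
    (summable_pow_aux hdnn hdsum (hx0.trans hxy) hy1)

lemma partial_le_tsum (hdnn : ∀ k, 0 ≤ d k) (hdsum : Summable d) (n : ℕ) :
    ∑ k ∈ Finset.range n, d k ≤ ∑' k, d k :=
  Summable.sum_le_tsum _ (fun k _ => hdnn k) hdsum

/-- `H ≤ H_n ≤ H + x^n` on `[0,1]`. -/
lemma trunc_bounds (hdnn : ∀ k, 0 ≤ d k) (hdsum : Summable d) (hdle : ∑' k, d k ≤ 1)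
    (n : ℕ) {x : ℝ} (hx0 : 0 ≤ x) (hx1 : x ≤ 1) :
    genFun d x ≤ genFunTrunc d n x ∧ genFunTrunc d n x ≤ genFun d x + x ^ n := by
  have hsum : Summable fun k => d k * x ^ k := summable_pow_aux hdnn hdsum hx0 hx1
  have hsplit : ∑ k ∈ Finset.range n, d k * x ^ k + (∑' k, d (k + n) * x ^ (k + n))
      = genFun d x := Summable.sum_add_tsum_nat_add n hsum
  have hdsplit : ∑ k ∈ Finset.range n, d k + (∑' k, d (k + n)) = ∑' k, d k :=
    Summable.sum_add_tsum_nat_add n hdsum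
  have htail_sum : Summable fun k => d (k + n) := (summable_nat_add_iff n).2 hdsum
  have htail_nonneg : 0 ≤ ∑' k, d (k + n) * x ^ (k + n) :=
    tsum_nonneg fun k => mul_nonneg (hdnn _) (pow_nonneg hx0 _)
  have htail_le : (∑' k, d (k + n) * x ^ (k + n)) ≤ (∑' k, d (k + n)) * x ^ n := by
    rw [← tsum_mul_right]
    refine Summable.tsum_le_tsum (fun k => ?_) ((summable_nat_add_iff n).2 hsum) (htail_sum.mul_right _)
    exact mul_le_mul_of_nonneg_left (pow_le_pow_of_le_one hx0 hx1 (Nat.le_add_left n k)) (hdnn _)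
  constructor
  · have h1 : (∑' k, d (k + n)) * x ^ n ≤ (1 - ∑ k ∈ Finset.range n, d k) * x ^ n := by
      apply mul_le_mul_of_nonneg_right _ (pow_nonneg hx0 n)
      linarith [hdsplit, hdle]
    unfold genFunTrunc
    linarith [htail_le.trans h1]
  · have h2 : (1 - ∑ k ∈ Finset.range n, d k) * x ^ n ≤ x ^ n := by
      apply mul_le_of_le_one_left (pow_nonneg hx0 n)
      have := Finset.sum_nonneg (fun k (_ : k ∈ Finset.range n) => hdnn k)
      linarith
    unfold genFunTrunc
    linarith

lemma trunc_mono (hdnn : ∀ k, 0 ≤ d k) (hdsum : Summable d) (hdle : ∑' k, d k ≤ 1)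
    (n : ℕ) {x y : ℝ} (hx0 : 0 ≤ x) (hxy : x ≤ y) (hy1 : y ≤ 1) :
    genFunTrunc d n x ≤ genFunTrunc d n y := by
  unfold genFunTrunc
  have hcoef : 0 ≤ 1 - ∑ k ∈ Finset.range n, d k := by
    linarith [(partial_le_tsum hdnn hdsum n).trans hdle]
  refine add_le_add (Finset.sum_le_sum fun k _ => ?_) ?_
  · exact mul_le_mul_of_nonneg_left (pow_le_pow_left₀ hx0 hxy k) (hdnn k)
  · exact mul_le_mul_of_nonneg_left (pow_le_pow_left₀ hx0 hxy n) hcoef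

lemma trunc_continuous (n : ℕ) : Continuous (genFunTrunc d n) := by
  unfold genFunTrunc
  fun_prop

lemma trunc_zero (hd0 : d 0 = 0) {n : ℕ} (hn : 1 ≤ n) : genFunTrunc d n 0 = 0 := by
  unfold genFunTrunc
  rw [Finset.sum_eq_single 0]
  · simp [hd0, zero_pow (by omega : n ≠ 0)]
  · intro k _ hk; simp [zero_pow hk]
  · intro h; exact absurd (Finset.mem_range.2 (by omega)) h

/-- `genFun` is continuous on `[0, a]` for `a < 1`. -/
lemma genFun_continuousOn (hdnn : ∀ k, 0 ≤ d k) (hdsum : Summable d) (hdle : ∑' k, d k ≤ 1)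
    {a : ℝ} (ha0 : 0 ≤ a) (ha1 : a < 1) : ContinuousOn (genFun d) (Set.Icc 0 a) := by
  have huc : TendstoUniformlyOn (fun n x => genFunTrunc d n x) (genFun d) atTop (Set.Icc 0 a) := by
    rw [Metric.tendstoUniformlyOn_iff]
    intro ε hε
    have : Tendsto (fun n : ℕ => a ^ n) atTop (nhds 0) :=
      tendsto_pow_atTop_nhds_zero_of_lt_one ha0 ha1
    filter_upwards [this.eventually_lt_const hε] with n hn x hx
    obtain ⟨hl, hu⟩ := trunc_bounds hdnn hdsum hdle n hx.1 (hx.2.trans ha1.le)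
    rw [Real.dist_eq, abs_sub_lt_iff]
    have hxa : x ^ n ≤ a ^ n := pow_le_pow_left₀ hx.1 hx.2 n
    constructor <;> linarith
  exact huc.continuousOn (Eventually.of_forall (fun n => (trunc_continuous n).continuousOn)).frequently

lemma genFun_lt_self (hd0 : d 0 = 0) (hdnn : ∀ k, 0 ≤ d k) (hdsum : Summable d)
    (hdle : ∑' k, d k ≤ 1) (hconv : ∃ k : ℕ, 2 ≤ k ∧ 0 < d k) {x : ℝ}
    (hx0 : 0 < x) (hx1 : x < 1) : genFun d x < x := by
  obtain ⟨k0, hk2, hk0⟩ := hconv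
  have hg : Summable fun k => d k * x := hdsum.mul_right x
  have hlt : genFun d x < ∑' k, d k * x := by
    apply Summable.tsum_lt_tsum_of_nonneg (i := k0)
      (fun k => mul_nonneg (hdnn k) (pow_nonneg hx0.le k)) _ _ hg
    · intro k
      match k with
      | 0 => simp [hd0]
      | (k+1) =>
        have : x ^ (k+1) ≤ x := by
          have := pow_le_pow_of_le_one hx0.le hx1.le (Nat.one_le_iff_ne_zero.2 (Nat.succ_ne_zero k))
          simpa using this
        exact mul_le_mul_of_nonneg_left this (hdnn _)
    · have hx2 : x ^ k0 < x := by
        have h1 : x ^ k0 ≤ x ^ 2 := pow_le_pow_of_le_one hx0.le hx1.le hk2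
        nlinarith
      exact mul_lt_mul_of_pos_left hx2 hk0
  have : (∑' k, d k * x) = (∑' k, d k) * x := tsum_mul_right
  rw [this] at hlt
  calc genFun d x < (∑' k, d k) * x := hlt
    _ ≤ x := mul_le_of_le_one_left hx0.le hdle

lemma genFun_strict_combo (hdnn : ∀ k, 0 ≤ d k) (hdsum : Summable d)
    (hconv : ∃ k : ℕ, 2 ≤ k ∧ 0 < d k) {a b t : ℝ} (ha0 : 0 ≤ a) (hab : a < b)
    (hb1 : b ≤ 1) (ht0 : 0 < t) (ht1 : t < 1) :
    genFun d (t * a + (1 - t) * b) < t * genFun d a + (1 - t) * genFun d b := by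
  obtain ⟨k0, hk2, hk0⟩ := hconv
  have hb0 : (0:ℝ) ≤ b := ha0.trans hab.le
  have hsa : Summable fun k => d k * a ^ k := summable_pow_aux hdnn hdsum ha0 (hab.le.trans hb1)
  have hsb : Summable fun k => d k * b ^ k := summable_pow_aux hdnn hdsum hb0 hb1
  have hg : Summable fun k => t * (d k * a ^ k) + (1 - t) * (d k * b ^ k) :=
    (hsa.mul_left t).add (hsb.mul_left (1 - t))
  have hx0 : 0 ≤ t * a + (1 - t) * b := by nlinarith
  have hlt : genFun d (t * a + (1 - t) * b)
      < ∑' k, (t * (d k * a ^ k) + (1 - t) * (d k * b ^ k)) := by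
    apply Summable.tsum_lt_tsum_of_nonneg (i := k0)
      (fun k => mul_nonneg (hdnn k) (pow_nonneg hx0 k)) _ _ hg
    · intro k
      have hpow := (convexOn_pow k).2 (Set.mem_Ici.2 ha0) (Set.mem_Ici.2 hb0)
        ht0.le (by linarith : (0:ℝ) ≤ 1 - t) (by ring : t + (1 - t) = 1)
      simp only [smul_eq_mul] at hpow
      calc d k * (t * a + (1 - t) * b) ^ k ≤ d k * (t * a ^ k + (1 - t) * b ^ k) :=
            mul_le_mul_of_nonneg_left hpow (hdnn k)
        _ = t * (d k * a ^ k) + (1 - t) * (d k * b ^ k) := by ring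
    · have hpow := (strictConvexOn_pow hk2).2 (Set.mem_Ici.2 ha0) (Set.mem_Ici.2 hb0)
        hab.ne ht0 (by linarith : (0:ℝ) < 1 - t) (by ring : t + (1 - t) = 1)
      simp only [smul_eq_mul] at hpow
      calc d k0 * (t * a + (1 - t) * b) ^ k0 < d k0 * (t * a ^ k0 + (1 - t) * b ^ k0) :=
            mul_lt_mul_of_pos_left hpow hk0
        _ = t * (d k0 * a ^ k0) + (1 - t) * (d k0 * b ^ k0) := by ring
  have heq : (∑' k, (t * (d k * a ^ k) + (1 - t) * (d k * b ^ k)))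
      = t * genFun d a + (1 - t) * genFun d b := by
    rw [Summable.tsum_add (hsa.mul_left t) (hsb.mul_left (1 - t)), tsum_mul_left, tsum_mul_left]
    rfl
  rw [heq] at hlt
  exact hlt

end helpers

/-- with `μ_n² = min {x ∈ [0,1] : H_n(x) - x = 1 - 2 μ_n¹}` and
`μ² = min {x ∈ [0,1] : H(x) - x = 1 - 2 μ¹}`, one has `μ_n² → μ²`. -/
theorem trunc_second_moment_converges (d : ℕ → ℝ) (hd0 : d 0 = 0) (hdnn : ∀ k, 0 ≤ d k)
    (hdsum : Summable d) (hdle : ∑' k, d k ≤ 1)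
    (hconv : ∃ k : ℕ, 2 ≤ k ∧ 0 < d k)
    (μ1 : ℝ) (hμ1 : μ1 ∈ Set.Ioo (0 : ℝ) 1) (hroot : genFun d μ1 + μ1 = 1)
    (μn : ℕ → ℝ)
    (hμn : ∀ n : ℕ, 1 ≤ n → μn n ∈ Set.Ioo (0 : ℝ) 1 ∧ genFunTrunc d n (μn n) + μn n = 1)
    (μn2 : ℕ → ℝ)
    (hμn2 : ∀ n : ℕ, 1 ≤ n →
      IsLeast {x ∈ Set.Icc (0 : ℝ) 1 | genFunTrunc d n x - x = 1 - 2 * μn n} (μn2 n))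
    (μ2 : ℝ) (hμ2 : IsLeast {x ∈ Set.Icc (0 : ℝ) 1 | genFun d x - x = 1 - 2 * μ1} μ2) :
    Tendsto μn2 atTop (nhds μ2) := by
  obtain ⟨hμ10, hμ11⟩ := hμ1
  have hHμ1 : genFun d μ1 < μ1 := genFun_lt_self hd0 hdnn hdsum hdle hconv hμ10 hμ11
  have hc : 1 - 2 * μ1 < 0 := by linarith
  -- μn n ≤ μ1
  have hle : ∀ n, 1 ≤ n → μn n ≤ μ1 := by
    intro n hn
    obtain ⟨⟨h0, h1⟩, heq⟩ := hμn n hn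
    by_contra hlt
    push_neg at hlt
    have h1' : genFunTrunc d n μ1 ≤ genFunTrunc d n (μn n) :=
      trunc_mono hdnn hdsum hdle n hμ10.le hlt.le h1.le
    have h2' : genFun d μ1 ≤ genFunTrunc d n μ1 :=
      (trunc_bounds hdnn hdsum hdle n hμ10.le hμ11.le).1
    linarith
  -- μn → μ1
  have hμn_tendsto : Tendsto μn atTop (nhds μ1) := by
    rw [tendsto_order]
    constructor
    · intro a ha
      rcases lt_or_ge a 0 with h | h
      · filter_upwards [eventually_ge_atTop 1] with n hn
        exact h.trans_le (hμn n hn).1.1.le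
      · have haμ : genFun d a + a < 1 := by
          have h1 : genFun d a ≤ genFun d μ1 := genFun_mono hdnn hdsum h ha.le hμ11.le
          linarith
        have hpow : Tendsto (fun n : ℕ => a ^ n) atTop (nhds 0) :=
          tendsto_pow_atTop_nhds_zero_of_lt_one h (ha.trans hμ11)
        filter_upwards [eventually_ge_atTop 1,
          hpow.eventually_lt_const (show (0:ℝ) < 1 - (genFun d a + a) by linarith)]
          with n hn hpn
        obtain ⟨⟨h0, h1⟩, heq⟩ := hμn n hn
        by_contra hng
        push_neg at hng
        have hm := trunc_mono hdnn hdsum hdle n h0.le hng (ha.trans hμ11).le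
        have hb := (trunc_bounds hdnn hdsum hdle n h (ha.trans hμ11).le).2
        linarith
    · intro b hb
      filter_upwards [eventually_ge_atTop 1] with n hn
      exact (hle n hn).trans_lt hb
  have hcn : Tendsto (fun n => 1 - 2 * μn n) atTop (nhds (1 - 2 * μ1)) :=
    tendsto_const_nhds.sub (hμn_tendsto.const_mul 2)
  obtain ⟨⟨⟨hμ20, hμ21⟩, hμ2F⟩, hμ2lb⟩ := hμ2
  have hμ2le : μ2 ≤ μ1 := hμ2lb ⟨⟨hμ10.le, hμ11.le⟩, by linarith⟩
  have hub : ∀ n, 1 ≤ n → μn2 n ≤ μn n := by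
    intro n hn
    obtain ⟨⟨h0, h1⟩, heq⟩ := hμn n hn
    exact (hμn2 n hn).2 ⟨⟨h0.le, h1.le⟩, by linarith⟩
  have hlb0 : ∀ n, 1 ≤ n → 0 ≤ μn2 n := fun n hn => ((hμn2 n hn).1).1.1
  rw [Metric.tendsto_nhds]
  intro ε hε
  have lower : ∀ᶠ n in atTop, μ2 - ε < μn2 n := by
    rcases le_or_gt μ2 (ε / 2) with hsm | hbig
    · filter_upwards [eventually_ge_atTop 1] with n hn
      have := hlb0 n hn; linarith
    · obtain ⟨b, hbdef⟩ : ∃ b : ℝ, b = μ2 - ε / 2 := ⟨_, rfl⟩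
      have hb0 : 0 < b := by linarith
      have hbμ2 : b < μ2 := by linarith
      have hbμ1 : b ≤ μ1 := by linarith
      have hb1 : b < 1 := by linarith
      have hcont : ContinuousOn (fun x => |genFun d x - x - (1 - 2 * μ1)|) (Set.Icc 0 b) :=
        (((genFun_continuousOn hdnn hdsum hdle hb0.le hb1).sub continuousOn_id).sub
          continuousOn_const).abs
      obtain ⟨xm, hxm, hmin⟩ :=
        isCompact_Icc.exists_isMinOn (Set.nonempty_Icc.2 hb0.le) hcont
      obtain ⟨δ, hδdef⟩ : ∃ δ' : ℝ, δ' = |genFun d xm - xm - (1 - 2 * μ1)| := ⟨_, rfl⟩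
      have hδpos : 0 < δ := by
        rw [hδdef, abs_pos]
        intro h0
        have hxm1 : xm ∈ Set.Icc (0:ℝ) 1 := ⟨hxm.1, by linarith [hxm.2]⟩
        have : μ2 ≤ xm := hμ2lb ⟨hxm1, by linarith⟩
        linarith [hxm.2]
      have hpow : Tendsto (fun n : ℕ => μ1 ^ n) atTop (nhds 0) :=
        tendsto_pow_atTop_nhds_zero_of_lt_one hμ10.le hμ11
      filter_upwards [eventually_ge_atTop 1, hpow.eventually_lt_const (half_pos hδpos),
        hcn.eventually (Metric.ball_mem_nhds _ (half_pos hδpos))] with n hn hpn hcnn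
      by_contra hng
      push_neg at hng
      have hx : μn2 n ∈ Set.Icc 0 b := ⟨hlb0 n hn, by linarith⟩
      obtain ⟨⟨_, hx1⟩, hFeq⟩ := (hμn2 n hn).1
      obtain ⟨hbd1, hbd2⟩ := trunc_bounds hdnn hdsum hdle n (hlb0 n hn) hx1
      have hxpow : (μn2 n) ^ n ≤ μ1 ^ n :=
        pow_le_pow_left₀ (hlb0 n hn) (by linarith [hx.2]) n
      have hmin' : δ ≤ |genFun d (μn2 n) - μn2 n - (1 - 2 * μ1)| := by
        rw [hδdef]; exact hmin hx
      rw [Real.dist_eq, abs_sub_lt_iff] at hcnn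
      have habs : |genFun d (μn2 n) - μn2 n - (1 - 2 * μ1)| < δ := by
        rw [abs_sub_lt_iff]
        constructor <;> linarith
      linarith
  have upper : ∀ᶠ n in atTop, μn2 n < μ2 + ε := by
    rcases le_or_gt μ1 μ2 with hcase | hcase
    · have hμ2eq1 : μ2 = μ1 := le_antisymm hμ2le hcase
      filter_upwards [eventually_ge_atTop 1] with n hn
      have := (hub n hn).trans (hle n hn)
      linarith
    · obtain ⟨x0, hx0def⟩ : ∃ x0 : ℝ, x0 = min (μ2 + ε / 2) ((μ2 + μ1) / 2) := ⟨_, rfl⟩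
      have hx0l : μ2 < x0 := hx0def ▸ lt_min (by linarith) (by linarith)
      have hx0r : x0 < μ1 := hx0def ▸ (min_le_right _ _).trans_lt (by linarith)
      have hx0ε : x0 ≤ μ2 + ε / 2 := hx0def ▸ min_le_left _ _
      have hx0nn : 0 ≤ x0 := hμ20.trans hx0l.le
      have hx1 : x0 < 1 := hx0r.trans hμ11
      obtain ⟨t, htdef⟩ : ∃ t : ℝ, t = (μ1 - x0) / (μ1 - μ2) := ⟨_, rfl⟩
      have ht0 : 0 < t := htdef ▸ div_pos (by linarith) (by linarith)
      have ht1 : t < 1 := htdef ▸ (div_lt_one (by linarith)).2 (by linarith)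
      have hmul : t * (μ1 - μ2) = μ1 - x0 := by
        rw [htdef]; exact div_mul_cancel₀ _ (by linarith : μ1 - μ2 ≠ 0)
      have hxeq : t * μ2 + (1 - t) * μ1 = x0 := by linear_combination (-1 : ℝ) * hmul
      have hconvlt := genFun_strict_combo hdnn hdsum hconv hμ20 hcase hμ11.le ht0 ht1
      rw [hxeq] at hconvlt
      have hFx0 : genFun d x0 - x0 < 1 - 2 * μ1 := by
        have hr : t * genFun d μ2 + (1 - t) * genFun d μ1
            = (1 - 2 * μ1) + (t * μ2 + (1 - t) * μ1) := by
          have hHμ2eq : genFun d μ2 = (1 - 2 * μ1) + μ2 := by linarith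
          have hHμ1eq : genFun d μ1 = 1 - μ1 := by linarith
          rw [hHμ2eq, hHμ1eq]; ring
        rw [hr, hxeq] at hconvlt
        linarith
      have hpowx0 : Tendsto (fun n : ℕ => x0 ^ n) atTop (nhds 0) :=
        tendsto_pow_atTop_nhds_zero_of_lt_one hx0nn hx1
      have hlim : Tendsto (fun n => genFun d x0 + x0 ^ n - x0 - (1 - 2 * μn n)) atTop
          (nhds (genFun d x0 + 0 - x0 - (1 - 2 * μ1))) :=
        ((tendsto_const_nhds.add hpowx0).sub tendsto_const_nhds).sub hcn
      filter_upwards [eventually_ge_atTop 1,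
        hlim.eventually_lt_const (show genFun d x0 + 0 - x0 - (1 - 2 * μ1) < 0 by linarith),
        hcn.eventually_lt_const hc] with n hn hFn hcnneg
      have hcont : ContinuousOn (fun x => genFunTrunc d n x - x - (1 - 2 * μn n))
          (Set.Icc 0 x0) :=
        (((trunc_continuous n).continuousOn.sub continuousOn_id).sub continuousOn_const)
      have hf0 : (0:ℝ) ∈ Set.Icc (genFunTrunc d n x0 - x0 - (1 - 2 * μn n))
          (genFunTrunc d n 0 - 0 - (1 - 2 * μn n)) := by
        constructor
        · have := (trunc_bounds hdnn hdsum hdle n hx0nn hx1.le).2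
          linarith
        · rw [trunc_zero hd0 hn]
          linarith
      obtain ⟨z, hz, hfz⟩ := intermediate_value_Icc' hx0nn hcont hf0
      have hz1 : z ≤ 1 := hz.2.trans hx1.le
      have hfz' : genFunTrunc d n z - z - (1 - 2 * μn n) = 0 := hfz
      have hle' : μn2 n ≤ z := (hμn2 n hn).2 ⟨⟨hz.1, hz1⟩, by linarith⟩
      linarith [hz.2, hle', hx0ε]
  filter_upwards [lower, upper] with n h1 h2
  rw [Real.dist_eq, abs_sub_lt_iff]
  constructor <;> linarith
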